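/- Let τ ∈ S_n be a permutation that is a product of an (n-1)-cycle on {1,...,n-1} and the fixed point n, and let q be an integer with d = gcd(q, n-1). Then τ^q is conjugate in S_n to an element of the Young subgroup S_{n-k} × S_k if and only if (n-1)/d divides k or (n-1)/d divides k-1. -/

import Mathlib

open Finset Equiv

private lemma zpow_add_apply {α : Type*} (σ : Equiv.Perm α) (a b : ℤ) (x : α) :
    (σ ^ (a + b)) x = (σ ^ a) ((σ ^ b) x) := by rw [zpow_add, Equiv.Perm.mul_apply]

private lemma closed_zpow {α : Type*} [DecidableEq α] [Fintype α] (σ : Equiv.Perm α)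
    (S : Finset α) (h : ∀ x ∈ S, σ x ∈ S) : ∀ (i : ℤ), ∀ x ∈ S, (σ ^ i) x ∈ S := by
  have hpow : ∀ (ρ : Equiv.Perm α), (∀ x ∈ S, ρ x ∈ S) → ∀ (j : ℕ), ∀ x ∈ S, (ρ ^ j) x ∈ S := by
    intro ρ hρ j
    induction j with
    | zero => simp
    | succ j ih =>
      intro x hx
      rw [pow_succ, Equiv.Perm.mul_apply]
      exact ih _ (hρ x hx)
  have hinv : ∀ x ∈ S, σ⁻¹ x ∈ S := by
    have himg : S.image σ = S :=
      Finset.eq_of_subset_of_card_le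
        (fun y hy => by
          obtain ⟨x, hx, rfl⟩ := Finset.mem_image.1 hy; exact h x hx)
        (le_of_eq (Finset.card_image_of_injective _ σ.injective).symm)
    intro x hx
    rw [← himg] at hx
    obtain ⟨y, hy, hyx⟩ := Finset.mem_image.1 hx
    have : σ⁻¹ x = y := by rw [← hyx]; simp
    rwa [this]
  intro i
  cases i with
  | ofNat j => simpa using hpow σ h j
  | negSucc j =>
    rw [zpow_negSucc, ← inv_pow]
    exact hpow σ⁻¹ hinv (j + 1)

private lemma card_dvd_closed {α : Type*} [DecidableEq α] [Fintype α] (σ : Equiv.Perm α)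
    (m : ℕ) (hm : 0 < m) (S : Finset α) (hS : ∀ x ∈ S, σ x ∈ S)
    (horb : ∀ x ∈ S, ∀ i : ℤ, (σ ^ i) x = x ↔ (m : ℤ) ∣ i) : m ∣ S.card := by
  induction S using Finset.strongInduction with
  | _ S ih =>
    rcases S.eq_empty_or_nonempty with rfl | ⟨x, hx⟩
    · simp
    · set C : Finset α := (Finset.range m).image (fun j => (σ ^ j) x) with hC
      have horbx := horb x hx
      have hmemC : ∀ i : ℤ, (σ ^ i) x ∈ C := by
        intro i
        have h1 : (0:ℤ) ≤ i % (m:ℤ) := Int.emod_nonneg i (by exact_mod_cast hm.ne')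
        have h2 : i % (m:ℤ) < (m:ℤ) := Int.emod_lt_of_pos i (by exact_mod_cast hm)
        have key : (σ ^ i) x = (σ ^ (i % (m:ℤ))) x := by
          have hsplit : i = i % (m:ℤ) + (i - i % (m:ℤ)) := by ring
          have hfix : (σ ^ (i - i % (m:ℤ))) x = x := (horbx _).2 (Int.dvd_self_sub_of_emod_eq rfl)
          conv_lhs => rw [hsplit]
          rw [zpow_add_apply, hfix]
        rw [key]
        refine Finset.mem_image.2 ⟨(i % (m:ℤ)).toNat, Finset.mem_range.2 ?_, ?_⟩
        · rw [← Nat.cast_lt (α := ℤ), Int.toNat_of_nonneg h1]; exact h2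
        · rw [← zpow_natCast, Int.toNat_of_nonneg h1]
      have hCS : C ⊆ S := by
        intro y hy
        obtain ⟨j, _, rfl⟩ := Finset.mem_image.1 hy
        have := closed_zpow σ S hS (j : ℤ) x hx
        rwa [zpow_natCast] at this
      have hCcard : C.card = m := by
        rw [hC, Finset.card_image_of_injOn, Finset.card_range]
        intro i hi j hj hij
        simp only [Finset.coe_range, Set.mem_Iio] at hi hj
        simp only at hij
        have hz : (σ ^ ((i:ℤ) - (j:ℤ))) x = x := by
          have key : (σ ^ (j:ℤ)) ((σ ^ ((i:ℤ) - (j:ℤ))) x) = (σ ^ (j:ℤ)) x := by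
            rw [← zpow_add_apply]
            have e : (j:ℤ) + ((i:ℤ) - (j:ℤ)) = (i:ℤ) := by ring
            rw [e, zpow_natCast, zpow_natCast]
            exact hij
          exact (σ ^ (j:ℤ)).injective key
        have hdvd := (horbx _).1 hz
        have := Int.eq_zero_of_abs_lt_dvd hdvd (abs_lt.2 ⟨by omega, by omega⟩)
        omega
      have hxC : x ∈ C := by simpa using hmemC 0
      have hssub : S \ C ⊂ S := Finset.sdiff_ssubset hCS ⟨x, hxC⟩
      have hclosed : ∀ y ∈ S \ C, σ y ∈ S \ C := by
        intro y hy
        obtain ⟨hyS, hyC⟩ := Finset.mem_sdiff.1 hy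
        refine Finset.mem_sdiff.2 ⟨hS y hyS, fun hmem => hyC ?_⟩
        obtain ⟨j, _, hj⟩ := Finset.mem_image.1 hmem
        have hy' : y = (σ ^ ((j:ℤ) - 1)) x := by
          have e : (j:ℤ) - 1 = -1 + (j:ℤ) := by ring
          rw [e, zpow_add_apply, zpow_neg_one, zpow_natCast, hj]
          simp
        rw [hy']
        exact hmemC _
      have hdvd : m ∣ (S \ C).card :=
        ih (S \ C) hssub hclosed (fun y hy => horb y (Finset.mem_sdiff.1 hy).1)
      have hcards := Finset.card_sdiff_add_card_eq_card hCS
      rw [← hcards, hCcard]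
      exact Nat.dvd_add hdvd dvd_rfl

private lemma card_filter_lt_fin (n c : ℕ) (h : c ≤ n) :
    ((Finset.univ : Finset (Fin n)).filter fun i : Fin n => (i : ℕ) < c).card = c := by
  conv_rhs => rw [← Finset.card_range c]
  apply Finset.card_bij' (fun (a : Fin n) _ => (a : ℕ))
      (fun j hj => (⟨j, lt_of_lt_of_le (Finset.mem_range.1 hj) h⟩ : Fin n))
  case hi =>
    intro a ha
    exact Finset.mem_range.2 (Finset.mem_filter.1 ha).2
  case hj =>
    intro j hj
    exact Finset.mem_filter.2 ⟨Finset.mem_univ _, Finset.mem_range.1 hj⟩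
  case left_inv =>
    intro a _
    rfl
  case right_inv =>
    intro j _
    rfl

private lemma card_filter_mod (d m a : ℕ) (hd : 0 < d) (ha : a ≤ d) :
    ((Finset.range (d * m)).filter fun j => j % d < a).card = a * m := by
  rw [← Finset.card_range (a * m)]
  apply Finset.card_bij' (fun j _ => j % d + a * (j / d))
      (fun j _ => j % a + d * (j / a))
  · intro j hj
    obtain ⟨hj1, hj2⟩ := Finset.mem_filter.1 hj
    rw [Finset.mem_range] at hj1 ⊢
    have hdiv : j / d < m := Nat.div_lt_of_lt_mul hj1
    have : a * (j / d) + a ≤ a * m := by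
      have := Nat.mul_le_mul_left a hdiv
      nlinarith
    omega
  · intro j hj
    rw [Finset.mem_range] at hj
    have ha0 : 0 < a := by
      rcases Nat.eq_zero_or_pos a with rfl | h
      · simp at hj
      · exact h
    have hmod : j % a < a := Nat.mod_lt _ ha0
    have hdiv : j / a < m := Nat.div_lt_of_lt_mul hj
    refine Finset.mem_filter.2 ⟨Finset.mem_range.2 ?_, ?_⟩
    · have : d * (j / a) + d ≤ d * m := by
        have := Nat.mul_le_mul_left d hdiv
        nlinarith
      omega
    · rw [Nat.add_mul_mod_self_left, Nat.mod_eq_of_lt (lt_of_lt_of_le hmod ha)]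
      exact hmod
  · intro j hj
    obtain ⟨hj1, hj2⟩ := Finset.mem_filter.1 hj
    have h1 : (j % d + a * (j / d)) % a = j % d % a := Nat.add_mul_mod_self_left _ _ _
    have h2 : j % d % a = j % d := Nat.mod_eq_of_lt hj2
    have h3 : (j % d + a * (j / d)) / a = j % d / a + j / d := by
      rcases Nat.eq_zero_or_pos a with rfl | ha0
      · omega
      · rw [Nat.add_mul_div_left _ _ ha0, Nat.div_eq_of_lt hj2]
    rw [h1, h2, h3, Nat.div_eq_of_lt hj2]
    simp [Nat.mod_add_div]
  · intro j hj
    rw [Finset.mem_range] at hj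
    have ha0 : 0 < a := by
      rcases Nat.eq_zero_or_pos a with rfl | h
      · simp at hj
      · exact h
    have hmod : j % a < a ∧ j % a < d := ⟨Nat.mod_lt _ ha0, lt_of_lt_of_le (Nat.mod_lt _ ha0) ha⟩
    have h1 : (j % a + d * (j / a)) % d = j % a := by
      rw [Nat.add_mul_mod_self_left, Nat.mod_eq_of_lt hmod.2]
    have h3 : (j % a + d * (j / a)) / d = j / a := by
      rw [Nat.add_mul_div_left _ _ hd, Nat.div_eq_of_lt hmod.2]
      omega
    rw [h1, h3]
    simp [Nat.mod_add_div]

private lemma exists_perm_image {n : ℕ} (U B : Finset (Fin n)) (h : U.card = B.card) :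
    ∃ g : Equiv.Perm (Fin n), ∀ x, g x ∈ B ↔ x ∈ U := by
  classical
  have hc : Uᶜ.card = Bᶜ.card := by
    rw [Finset.card_compl, Finset.card_compl, h]
  let e : {x // x ∈ U} ≃ {x // x ∈ B} := Finset.equivOfCardEq h
  let e' : {x // ¬ x ∈ U} ≃ {x // ¬ x ∈ B} :=
    ((Equiv.subtypeEquivRight (fun x => by simp)).trans (Finset.equivOfCardEq hc)).trans
      (Equiv.subtypeEquivRight (fun x => by simp))
  let g : Equiv.Perm (Fin n) :=
    ((Equiv.sumCompl (fun x => x ∈ U)).symm.trans (e.sumCongr e')).trans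
      (Equiv.sumCompl (fun x => x ∈ B))
  refine ⟨g, fun x => ?_⟩
  by_cases hx : x ∈ U
  · have : g x = ((e ⟨x, hx⟩ : {x // x ∈ B}) : Fin n) := by
      simp only [g, Equiv.trans_apply, Equiv.sumCompl_symm_apply_of_pos hx,
        Equiv.sumCongr_apply, Sum.map_inl, Equiv.sumCompl_apply_inl]
    simp [this, hx, Finset.coe_mem]
  · have : g x = ((e' ⟨x, hx⟩ : {x // ¬ x ∈ B}) : Fin n) := by
      simp only [g, Equiv.trans_apply, Equiv.sumCompl_symm_apply_of_neg hx,
        Equiv.sumCongr_apply, Sum.map_inr, Equiv.sumCompl_apply_inr]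
    have h2 := (e' ⟨x, hx⟩).2
    rw [this]
    exact iff_of_false h2 hx

/-- The Young subgroup `S_{n-k} × S_k ≤ S_n` of permutations preserving the
partition of `{0, ..., n-1}` into the first `n - k` and the last `k` letters. -/
def YoungSubgroup (n k : ℕ) : Subgroup (Equiv.Perm (Fin n)) where
  carrier := {g | ∀ i : Fin n, ((g i : ℕ) < n - k ↔ (i : ℕ) < n - k)}
  one_mem' := fun _ => Iff.rfl
  mul_mem' := by
    intro g h hg hh i
    simpa [Equiv.Perm.mul_apply] using (hg (h i)).trans (hh i)
  inv_mem' := by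
    intro g hg i
    simpa using (hg (g⁻¹ i)).symm

theorem statement5 (n k : ℕ) (hn : 0 < n) (hk1 : 1 ≤ k) (hk : k ≤ n)
    (τ : Equiv.Perm (Fin n)) (hτ : τ.IsCycle) (hsupp : τ.support.card = n - 1)
    (hfix : τ ⟨n - 1, by omega⟩ = ⟨n - 1, by omega⟩) (q : ℤ) :
    (∃ g : Equiv.Perm (Fin n), g * τ ^ q * g⁻¹ ∈ YoungSubgroup n k) ↔
      ((n - 1) / Int.gcd q (n - 1) ∣ k ∨ (n - 1) / Int.gcd q (n - 1) ∣ k - 1) := by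
  classical
  have hN2 : 2 ≤ n - 1 := by rw [← hsupp]; exact hτ.two_le_card_support
  set N := n - 1 with hNdef
  have hsupp' : τ.support.card = N := hsupp
  have hcast : ((n : ℤ) - 1) = ((N : ℕ) : ℤ) := by
    rw [hNdef]; omega
  rw [hcast]
  set d := Int.gcd q (N : ℤ) with hd_def
  have hd0 : 0 < d := Int.gcd_pos_iff.2 (Or.inr (by exact_mod_cast (by omega : N ≠ 0)))
  have hdN : d ∣ N := Int.natCast_dvd_natCast.1 (Int.gcd_dvd_right _ _)
  set m := N / d with hm_def
  have hdm : d * m = N := Nat.mul_div_cancel' hdN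
  have hm0 : 0 < m := Nat.div_pos (Nat.le_of_dvd (by omega) hdN) hd0
  have horder : orderOf τ = N := by rw [hτ.orderOf, hsupp']
  have hτN : τ ^ N = 1 := by rw [← horder]; exact pow_orderOf_eq_one τ
  have hτNz : τ ^ (N : ℤ) = 1 := by rw [zpow_natCast, hτN]
  have hon : τ.IsCycleOn (τ.support : Set (Fin n)) := by
    have := hτ.isCycleOn
    rwa [← Equiv.Perm.coe_support_eq_set_support] at this
  have hzpe : ∀ x ∈ τ.support, ∀ i : ℤ, (τ ^ i) x = x ↔ (N : ℤ) ∣ i := by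
    intro x hx i
    have := hon.zpow_apply_eq hx (n := i)
    rwa [hsupp'] at this
  set p : Fin n := ⟨n - 1, by omega⟩ with hp
  have hfixp : τ p = p := hfix
  have hpns : p ∉ τ.support := Equiv.Perm.notMem_support.2 hfixp
  have hmem_supp : ∀ x : Fin n, x ≠ p → x ∈ τ.support := by
    intro x hx
    by_contra hxs
    have hcompl : (τ.supportᶜ : Finset (Fin n)).card = 1 := by
      rw [Finset.card_compl, hsupp', Fintype.card_fin]
      omega
    obtain ⟨a, ha⟩ := Finset.card_eq_one.1 hcompl
    have h1 : x ∈ τ.supportᶜ := Finset.mem_compl.2 hxs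
    have h2 : p ∈ τ.supportᶜ := Finset.mem_compl.2 hpns
    rw [ha, Finset.mem_singleton] at h1 h2
    exact hx (h1.trans h2.symm)
  have hdq : (d : ℤ) ∣ q := hd_def ▸ Int.gcd_dvd_left _ _
  have hqd : τ ^ q = (τ ^ (d : ℕ)) ^ (q / (d : ℤ)) := by
    rw [← zpow_natCast τ d, ← zpow_mul, Int.mul_ediv_cancel' hdq]
  have hdq2 : τ ^ (d : ℕ) = (τ ^ q) ^ Int.gcdA q (N : ℤ) := by
    have hbez : ((d : ℕ) : ℤ) = q * Int.gcdA q (N : ℤ) + (N : ℤ) * Int.gcdB q (N : ℤ) :=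
      Int.gcd_eq_gcd_ab q (N : ℤ)
    calc τ ^ (d : ℕ) = τ ^ ((d : ℕ) : ℤ) := by rw [zpow_natCast]
      _ = τ ^ (q * Int.gcdA q (N : ℤ) + (N : ℤ) * Int.gcdB q (N : ℤ)) := by rw [← hbez]
      _ = (τ ^ q) ^ Int.gcdA q (N : ℤ) * (τ ^ (N : ℤ)) ^ Int.gcdB q (N : ℤ) := by
          rw [zpow_add, zpow_mul, zpow_mul]
      _ = (τ ^ q) ^ Int.gcdA q (N : ℤ) := by rw [hτNz]; simp
  have horbd : ∀ x ∈ τ.support, ∀ i : ℤ, ((τ ^ (d : ℕ)) ^ i) x = x ↔ (m : ℤ) ∣ i := by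
    intro x hx i
    have h1 : (τ ^ (d : ℕ)) ^ i = τ ^ ((d : ℤ) * i) := by
      rw [← zpow_natCast τ d, ← zpow_mul]
    rw [h1, hzpe x hx]
    have hNdm : (N : ℤ) = (d : ℤ) * (m : ℤ) := by exact_mod_cast hdm.symm
    rw [hNdm, mul_dvd_mul_iff_left (show (d : ℤ) ≠ 0 by exact_mod_cast hd0.ne')]
  set B : Finset (Fin n) := Finset.univ.filter (fun i : Fin n => ¬ (i : ℕ) < n - k) with hB
  have hBcard : B.card = k := by
    have h1 := card_filter_lt_fin n (n - k) (by omega)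
    have h2 : B = (Finset.univ.filter (fun i : Fin n => (i : ℕ) < n - k))ᶜ := by
      rw [hB, Finset.compl_filter]
    rw [h2, Finset.card_compl, h1, Fintype.card_fin]
    omega
  have hBmem : ∀ x : Fin n, x ∈ B ↔ ¬ (x : ℕ) < n - k := by
    intro x
    rw [hB, Finset.mem_filter]
    simp
  constructor
  · rintro ⟨g, hg⟩
    have hg' : ∀ i : Fin n, (((g * τ ^ q * g⁻¹) i : Fin n) : ℕ) < n - k ↔ (i : ℕ) < n - k := hg
    set U : Finset (Fin n) := B.image (⇑g⁻¹) with hU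
    have hUcard : U.card = k := by
      rw [hU, Finset.card_image_of_injective _ (g⁻¹ : Equiv.Perm (Fin n)).injective, hBcard]
    have hUclosed : ∀ x ∈ U, (τ ^ q) x ∈ U := by
      intro x hx
      obtain ⟨b, hb, rfl⟩ := Finset.mem_image.1 hx
      refine Finset.mem_image.2 ⟨g ((τ ^ q) (g⁻¹ b)), ?_, by simp⟩
      have hb' : ¬ ((b : ℕ) < n - k) := (hBmem b).1 hb
      have happ : (g * τ ^ q * g⁻¹) b = g ((τ ^ q) (g⁻¹ b)) := rfl
      refine (hBmem _).2 ?_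
      intro hcontra
      apply hb'
      apply (hg' b).1
      rw [happ]
      exact hcontra
    have hUd : ∀ x ∈ U, (τ ^ (d : ℕ)) x ∈ U := by
      intro x hx
      rw [hdq2]
      exact closed_zpow (τ ^ q) U hUclosed _ x hx
    set S := U.erase p with hS
    have hSsupp : ∀ x ∈ S, x ∈ τ.support := fun x hx => hmem_supp x (Finset.ne_of_mem_erase hx)
    have hSclosed : ∀ x ∈ S, (τ ^ (d : ℕ)) x ∈ S := by
      intro x hx
      have hxU : x ∈ U := Finset.mem_of_mem_erase hx
      refine Finset.mem_erase.2 ⟨?_, hUd x hxU⟩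
      intro hEq
      have hfixd : (τ ^ (d : ℕ)) p = p :=
        Equiv.Perm.pow_apply_eq_self_of_apply_eq_self hfixp d
      have : x = p := by
        apply (τ ^ (d : ℕ)).injective
        rw [hEq, hfixd]
      exact (Finset.ne_of_mem_erase hx) this
    have hSdvd : m ∣ S.card :=
      card_dvd_closed (τ ^ (d : ℕ)) m hm0 S hSclosed (fun x hx i => horbd x (hSsupp x hx) i)
    by_cases hpU : p ∈ U
    · right
      have : S.card = k - 1 := by rw [hS, Finset.card_erase_of_mem hpU, hUcard]
      rwa [this] at hSdvd
    · left
      have : S = U := Finset.erase_eq_of_notMem hpU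
      rw [this, hUcard] at hSdvd
      exact hSdvd
  · intro h
    obtain ⟨x₀, hx₀⟩ := Finset.card_pos.1 (show 0 < τ.support.card by omega)
    have hV : ∀ a : ℕ, a ≤ d → ∃ V : Finset (Fin n), V.card = a * m ∧
        (∀ x ∈ V, x ∈ τ.support) ∧ (∀ x ∈ V, (τ ^ q) x ∈ V) := by
      intro a ha
      set F : ℕ → Fin n := fun j => (τ ^ j) x₀ with hF
      set V := ((Finset.range N).filter (fun j => j % d < a)).image F with hVdef
      have hFinj : ∀ i, i < N → ∀ j, j < N → F i = F j → i = j := by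
        intro i hi j hj hFij
        have hz : (τ ^ ((i : ℤ) - (j : ℤ))) x₀ = x₀ := by
          have key : (τ ^ (j : ℤ)) ((τ ^ ((i : ℤ) - (j : ℤ))) x₀) = (τ ^ (j : ℤ)) x₀ := by
            rw [← zpow_add_apply]
            have e : (j : ℤ) + ((i : ℤ) - (j : ℤ)) = (i : ℤ) := by ring
            rw [e, zpow_natCast, zpow_natCast]
            exact hFij
          exact (τ ^ (j : ℤ)).injective key
        have hdvd := (hzpe x₀ hx₀ _).1 hz
        have := Int.eq_zero_of_abs_lt_dvd hdvd (abs_lt.2 ⟨by omega, by omega⟩)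
        omega
      have hVcard : V.card = a * m := by
        rw [hVdef, Finset.card_image_of_injOn, ← hdm, card_filter_mod d m a hd0 ha]
        intro i hi j hj hij
        simp only [Finset.coe_filter, Set.mem_setOf_eq, Finset.mem_range] at hi hj
        exact hFinj i hi.1 j hj.1 hij
      have hVsupp : ∀ x ∈ V, x ∈ τ.support := by
        intro x hx
        obtain ⟨j, _, rfl⟩ := Finset.mem_image.1 hx
        exact Equiv.Perm.pow_apply_mem_support.2 hx₀
      have hVd : ∀ x ∈ V, (τ ^ (d : ℕ)) x ∈ V := by
        intro x hx
        obtain ⟨j, hjmem, rfl⟩ := Finset.mem_image.1 hx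
        obtain ⟨hj1, hj2⟩ := Finset.mem_filter.1 hjmem
        rw [Finset.mem_range] at hj1
        refine Finset.mem_image.2 ⟨(j + d) % N, ?_, ?_⟩
        · refine Finset.mem_filter.2 ⟨Finset.mem_range.2 (Nat.mod_lt _ (by omega)), ?_⟩
          rw [Nat.mod_mod_of_dvd _ hdN, Nat.add_mod_right]
          exact hj2
        · show F ((j + d) % N) = (τ ^ (d : ℕ)) (F j)
          have h1 : (τ ^ (d : ℕ)) (F j) = F (d + j) := by
            rw [hF]
            simp only
            rw [← Equiv.Perm.mul_apply, ← pow_add]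
          have h2 : F ((j + d) % N) = F (j + d) := by
            rw [hF]
            simp only
            rw [← pow_eq_pow_mod _ hτN]
          rw [h1, h2, Nat.add_comm j d]
      have hVq : ∀ x ∈ V, (τ ^ q) x ∈ V := by
        intro x hx
        rw [hqd]
        exact closed_zpow _ V hVd _ x hx
      exact ⟨V, hVcard, hVsupp, hVq⟩
    have hdiv_bound : N / m = d := by
      rw [← hdm, Nat.mul_div_cancel _ hm0]
    have hEx : ∃ U : Finset (Fin n), U.card = k ∧ ∀ x ∈ U, (τ ^ q) x ∈ U := by
      by_cases hc : m ∣ (k - 1)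
      · have hbound : (k - 1) / m ≤ d := by
          rw [← hdiv_bound]
          exact Nat.div_le_div_right (by omega)
        obtain ⟨V, hV1, hV2, hV3⟩ := hV ((k - 1) / m) hbound
        have hpV : p ∉ V := fun hpv => hpns (hV2 p hpv)
        refine ⟨insert p V, ?_, ?_⟩
        · rw [Finset.card_insert_of_notMem hpV, hV1, Nat.div_mul_cancel hc]
          omega
        · intro x hx
          rcases Finset.mem_insert.1 hx with rfl | hxV
          · refine Finset.mem_insert.2 (Or.inl ?_)
            exact Equiv.Perm.notMem_support.1
              (fun hmem => hpns (Equiv.Perm.support_zpow_le τ q hmem))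
          · exact Finset.mem_insert.2 (Or.inr (hV3 x hxV))
      · have hmk : m ∣ k := by
          rcases h with h' | h'
          · exact h'
          · exact absurd h' hc
        have hkN : k ≤ N := by
          by_contra hknn
          have hkn : k = n := by omega
          have hmN : m ∣ N := ⟨d, by rw [← hdm]; ring⟩
          have hm1 : m ∣ 1 := by
            have := Nat.dvd_sub hmk hmN
            rw [hkn] at this
            simpa [show n - N = 1 by omega] using this
          exact hc (by simp [Nat.dvd_one.mp hm1])
        obtain ⟨V, hV1, hV2, hV3⟩ := hV (k / m) (by rw [← hdiv_bound]; exact Nat.div_le_div_right hkN)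
        exact ⟨V, by rw [hV1, Nat.div_mul_cancel hmk], hV3⟩
    obtain ⟨U, hUcard, hUq⟩ := hEx
    obtain ⟨g, hgU⟩ := exists_perm_image U B (by rw [hUcard, hBcard])
    refine ⟨g, ?_⟩
    show ∀ i : Fin n, (((g * τ ^ q * g⁻¹) i : Fin n) : ℕ) < n - k ↔ (i : ℕ) < n - k
    intro i
    have hUiff : ∀ x : Fin n, (τ ^ q) x ∈ U ↔ x ∈ U := by
      intro x
      constructor
      · intro hx
        have := closed_zpow (τ ^ q) U hUq (-1) _ hx
        simpa using this
      · exact hUq x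
    have happ : (g * τ ^ q * g⁻¹) i = g ((τ ^ q) (g⁻¹ i)) := rfl
    have key : g ((τ ^ q) (g⁻¹ i)) ∈ B ↔ i ∈ B := by
      rw [hgU, hUiff, ← hgU, ← Equiv.Perm.mul_apply, mul_inv_cancel, Equiv.Perm.one_apply]
    rw [happ]
    have h1 := hBmem (g ((τ ^ q) (g⁻¹ i)))
    have h2 := hBmem i
    constructor
    · intro hlt
      by_contra hcon
      exact (h1.1 (key.2 (h2.2 hcon))) hlt
    · intro hlt
      by_contra hcon
      exact (h2.1 (key.1 (h1.2 hcon))) hlt
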